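/- Let A, B, C be finite types, let d1 be an equivalence relation on (A ⊕ B) × ZMod 2 and d2 an equivalence relation on (B ⊕ C) × ZMod 2. Let flip denote the operation transporting an equivalence relation on (X ⊕ Y) × ZMod 2 to one on (Y ⊕ X) × ZMod 2 along the swap equivalence. Then flip(d1 ∘ d2) = flip(d2) ∘ flip(d1), and the number of equivalence classes of the intermediate relation on (A ⊕ B ⊕ C) × ZMod 2 that are contained in B × ZMod 2 (the classes removed in forming the composite, which give the power of x in the partition-algebra product) is the same for the two compositions. Hence the flip map extends to an involutary anti-automorphism of the diagram algebra. -/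

import Mathlib

/-- Inclusion of the first diagram's rows into `α ⊕ β ⊕ γ`. -/
def ins1 {α β γ : Type*} : α ⊕ β → α ⊕ β ⊕ γ :=
  Sum.elim Sum.inl (fun b => Sum.inr (Sum.inl b))

/-- Inclusion of the second diagram's rows into `α ⊕ β ⊕ γ`. -/
def ins2 {α β γ : Type*} : β ⊕ γ → α ⊕ β ⊕ γ :=
  Sum.elim (fun b => Sum.inr (Sum.inl b)) (fun c => Sum.inr (Sum.inr c))

/-- Inclusion of the outer rows into `α ⊕ β ⊕ γ`. -/
def ins3 {α β γ : Type*} : α ⊕ γ → α ⊕ β ⊕ γ :=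
  Sum.elim Sum.inl (fun c => Sum.inr (Sum.inr c))

/-- The smallest equivalence relation on `(α ⊕ β ⊕ γ) × ZMod 2` containing the
images of `d1` and `d2` under the natural inclusions. -/
def joinRel {α β γ : Type*} (d1 : Setoid ((α ⊕ β) × ZMod 2))
    (d2 : Setoid ((β ⊕ γ) × ZMod 2)) : Setoid ((α ⊕ β ⊕ γ) × ZMod 2) :=
  Relation.EqvGen.setoid (fun p q =>
    (∃ p' q' : (α ⊕ β) × ZMod 2, d1.r p' q' ∧
      p = (ins1 p'.1, p'.2) ∧ q = (ins1 q'.1, q'.2)) ∨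
    (∃ p' q' : (β ⊕ γ) × ZMod 2, d2.r p' q' ∧
      p = (ins2 p'.1, p'.2) ∧ q = (ins2 q'.1, q'.2)))

/-- Diagram composition: restrict the join of `d1` and `d2` to `(α ⊕ γ) × ZMod 2`. -/
def diagComp {α β γ : Type*} (d1 : Setoid ((α ⊕ β) × ZMod 2))
    (d2 : Setoid ((β ⊕ γ) × ZMod 2)) : Setoid ((α ⊕ γ) × ZMod 2) :=
  Setoid.comap (fun p => (ins3 p.1, p.2)) (joinRel d1 d2)

/-- The flip of a relation on `(X ⊕ Y) × ZMod 2`: transport along the swap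
equivalence `X ⊕ Y ≃ Y ⊕ X`. -/
def flipRel {X Y : Type*} (d : Setoid ((X ⊕ Y) × ZMod 2)) :
    Setoid ((Y ⊕ X) × ZMod 2) :=
  Setoid.comap (fun p => (p.1.swap, p.2)) d

/-- Swap of the triple sum. -/
def sw3 {α β γ : Type*} : α ⊕ β ⊕ γ → γ ⊕ β ⊕ α :=
  Sum.elim (fun a => Sum.inr (Sum.inr a))
    (Sum.elim (fun b => Sum.inr (Sum.inl b)) Sum.inl)

theorem sw3_sw3 {α β γ : Type*} (x : α ⊕ β ⊕ γ) : sw3 (sw3 x) = x := by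
  rcases x with a | b | c <;> rfl

theorem eqvGen_map {X Y : Type*} {r : X → X → Prop} {s : Y → Y → Prop} (F : X → Y)
    (h : ∀ a b, r a b → s (F a) (F b)) {a b : X} (hab : Relation.EqvGen r a b) :
    Relation.EqvGen s (F a) (F b) := by
  induction hab with
  | rel a b h' => exact Relation.EqvGen.rel _ _ (h _ _ h')
  | refl a => exact Relation.EqvGen.refl _
  | symm a b _ ih => exact Relation.EqvGen.symm _ _ ih
  | trans a b c _ _ ih1 ih2 => exact Relation.EqvGen.trans _ _ _ ih1 ih2

theorem flipRel_flipRel {X Y : Type*} (d : Setoid ((X ⊕ Y) × ZMod 2)) :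
    flipRel (flipRel d) = d := by
  apply Setoid.ext
  intro p q
  rcases p with ⟨x | x, v⟩ <;> rcases q with ⟨y | y, w⟩ <;> exact Iff.rfl

theorem join_flip {α β γ : Type*} (d1 : Setoid ((α ⊕ β) × ZMod 2))
    (d2 : Setoid ((β ⊕ γ) × ZMod 2)) {p q : (α ⊕ β ⊕ γ) × ZMod 2}
    (h : (joinRel d1 d2).r p q) :
    (joinRel (flipRel d2) (flipRel d1)).r (sw3 p.1, p.2) (sw3 q.1, q.2) := by
  refine eqvGen_map (fun p => (sw3 p.1, p.2)) ?_ h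
  rintro a b (⟨p', q', hr, rfl, rfl⟩ | ⟨p', q', hr, rfl, rfl⟩)
  · right
    refine ⟨(p'.1.swap, p'.2), (q'.1.swap, q'.2), ?_, ?_, ?_⟩
    · show (flipRel d1).r _ _
      exact (by simpa using hr : d1 (p'.1.swap.swap, p'.2) (q'.1.swap.swap, q'.2))
    · rcases p' with ⟨x | x, v⟩ <;> rfl
    · rcases q' with ⟨x | x, v⟩ <;> rfl
  · left
    refine ⟨(p'.1.swap, p'.2), (q'.1.swap, q'.2), ?_, ?_, ?_⟩
    · show (flipRel d2).r _ _
      exact (by simpa using hr : d2 (p'.1.swap.swap, p'.2) (q'.1.swap.swap, q'.2))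
    · rcases p' with ⟨x | x, v⟩ <;> rfl
    · rcases q' with ⟨x | x, v⟩ <;> rfl

theorem join_flip_iff {α β γ : Type*} (d1 : Setoid ((α ⊕ β) × ZMod 2))
    (d2 : Setoid ((β ⊕ γ) × ZMod 2)) (p q : (α ⊕ β ⊕ γ) × ZMod 2) :
    (joinRel d1 d2).r p q ↔
      (joinRel (flipRel d2) (flipRel d1)).r (sw3 p.1, p.2) (sw3 q.1, q.2) := by
  constructor
  · exact join_flip d1 d2
  · intro h
    have := join_flip (flipRel d2) (flipRel d1) h
    rw [flipRel_flipRel, flipRel_flipRel] at this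
    simpa [sw3_sw3] using this

/-- The key equivalence of ambient spaces. -/
def E3 {α β γ : Type*} : (α ⊕ β ⊕ γ) × ZMod 2 ≃ (γ ⊕ β ⊕ α) × ZMod 2 where
  toFun p := (sw3 p.1, p.2)
  invFun p := (sw3 p.1, p.2)
  left_inv p := by simp [sw3_sw3]
  right_inv p := by simp [sw3_sw3]

/-- `flip (d1 ∘ d2) = flip d2 ∘ flip d1`, and the number of classes of
the intermediate join relation contained in the middle row `β × ZMod 2` (the
removed components, giving the power of `x` in the partition-algebra product) is
the same for the two compositions.  Hence flipping extends to an involutary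
anti-automorphism of the diagram algebra. -/
theorem stmt_10 {α β γ : Type*} [Finite α] [Finite β] [Finite γ]
    (d1 : Setoid ((α ⊕ β) × ZMod 2)) (d2 : Setoid ((β ⊕ γ) × ZMod 2)) :
    flipRel (diagComp d1 d2) = diagComp (flipRel d2) (flipRel d1) ∧
    Nat.card {C : Set ((α ⊕ β ⊕ γ) × ZMod 2) // C ∈ (joinRel d1 d2).classes ∧
        ∀ p ∈ C, ∃ b x, p = (Sum.inr (Sum.inl b), x)} =
      Nat.card {C : Set ((γ ⊕ β ⊕ α) × ZMod 2) //
        C ∈ (joinRel (flipRel d2) (flipRel d1)).classes ∧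
        ∀ p ∈ C, ∃ b x, p = (Sum.inr (Sum.inl b), x)} := by
  have hsw : ∀ (z : γ ⊕ α), sw3 (ins3 z.swap) = (ins3 z : γ ⊕ β ⊕ α) := by
    rintro (c | a) <;> rfl
  constructor
  · apply Setoid.ext
    intro p q
    show (joinRel d1 d2).r (ins3 p.1.swap, p.2) (ins3 q.1.swap, q.2) ↔
      (joinRel (flipRel d2) (flipRel d1)).r (ins3 p.1, p.2) (ins3 q.1, q.2)
    rw [join_flip_iff]
    simp [hsw]
  · -- cardinality via explicit bijection of classes
    set J1 := joinRel d1 d2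
    set J2 := joinRel (flipRel d2) (flipRel d1)
    have hE : ∀ p q, J1.r p q ↔ J2.r (E3 p) (E3 q) := fun p q =>
      join_flip_iff d1 d2 p q
    have himg : ∀ C : Set ((α ⊕ β ⊕ γ) × ZMod 2), C ∈ J1.classes →
        (E3 : _ → _) '' C ∈ J2.classes := by
      rintro C ⟨y, rfl⟩
      refine ⟨E3 y, ?_⟩
      ext z
      constructor
      · rintro ⟨w, hw, rfl⟩
        exact (hE w y).1 hw
      · intro hz
        refine ⟨E3.symm z, ?_, by simp⟩
        have h1 : J1.r (E3.symm z) (E3.symm (E3 y)) := (hE _ _).2 (by simpa using hz)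
        show J1.r (E3.symm z) y
        simpa using h1
    have himg' : ∀ C : Set ((γ ⊕ β ⊕ α) × ZMod 2), C ∈ J2.classes →
        (E3.symm : _ → _) '' C ∈ J1.classes := by
      rintro C ⟨y, rfl⟩
      refine ⟨E3.symm y, ?_⟩
      ext z
      constructor
      · rintro ⟨w, hw, rfl⟩
        show J1.r (E3.symm w) (E3.symm y)
        refine (hE _ _).2 ?_
        simpa using hw
      · intro hz
        refine ⟨E3 z, ?_, by simp⟩
        show J2.r (E3 z) y
        have h1 : J1.r z (E3.symm y) := hz
        have := (hE _ _).1 h1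
        simpa using this
    have hmidE : ∀ (b : β) (x : ZMod 2),
        E3 ((Sum.inr (Sum.inl b) : α ⊕ β ⊕ γ), x) = (Sum.inr (Sum.inl b), x) := fun _ _ => rfl
    have hmidE' : ∀ (b : β) (x : ZMod 2),
        E3.symm ((Sum.inr (Sum.inl b) : γ ⊕ β ⊕ α), x) = (Sum.inr (Sum.inl b), x) :=
      fun _ _ => rfl
    apply Nat.card_congr
    refine
      { toFun := fun C => ⟨(E3 : _ → _) '' C.1, himg C.1 C.2.1, ?_⟩
        invFun := fun C => ⟨(E3.symm : _ → _) '' C.1, himg' C.1 C.2.1, ?_⟩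
        left_inv := ?_
        right_inv := ?_ }
    · rintro p ⟨q, hq, rfl⟩
      obtain ⟨b, x, rfl⟩ := C.2.2 q hq
      exact ⟨b, x, (hmidE b x)⟩
    · rintro p ⟨q, hq, rfl⟩
      obtain ⟨b, x, rfl⟩ := C.2.2 q hq
      exact ⟨b, x, (hmidE' b x)⟩
    · rintro ⟨C, hC⟩
      ext z
      simp [Set.image_image]
    · rintro ⟨C, hC⟩
      ext z
      simp [Set.image_image]
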